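/- Let G be a homogeneous group with left-invariant homogeneous distance d and dilations δ_λ, and let Γ ⊆ G, w ∈ Γ. Suppose there is a closed set V(w) ⊆ G, invariant under all dilations δ_λ and containing the identity 0, such that for every k > 0 the sets δ_λ(w⁻¹·Γ) ∩ B(0,k) converge to V(w) ∩ B(0,k) in Hausdorff distance as λ → ∞. Then for every β > 0 there exists ρ > 0 such that Γ ∩ B(w,ρ) ⊆ w·C_{V(w)}(β), where C_{V(w)}(β) = {p ∈ G : dist(p, V(w)) ≤ β‖p‖}. -/
import Mathlib


open Metric Filter Topology

/-- If the blow-ups `δ_λ(w⁻¹Γ)` converge in local Hausdorff distance to a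
dilation-invariant closed set `V(w)`, then near `w` the set `Γ` is contained in
arbitrarily small cones `w·C_{V(w)}(β)`. -/
theorem stmt_15 {G : Type*} [Group G] [MetricSpace G]
    (δ : ℝ → G → G)
    (hδmul : ∀ l, 0 < l → ∀ x y : G, δ l (x * y) = δ l x * δ l y)
    (hδcomp : ∀ l s, 0 < l → 0 < s → ∀ x : G, δ l (δ s x) = δ (l * s) x)
    (hδone : ∀ x : G, δ 1 x = x)
    (hdleft : ∀ z x y : G, dist (z * x) (z * y) = dist x y)
    (hdhom : ∀ l, 0 < l → ∀ x y : G, dist (δ l x) (δ l y) = l * dist x y)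
    (Γ : Set G) (w : G) (hw : w ∈ Γ)
    (Vw : Set G) (hVclosed : IsClosed Vw) (hV1 : (1 : G) ∈ Vw)
    (hVdil : ∀ l, 0 < l → ∀ v ∈ Vw, δ l v ∈ Vw)
    (htan : ∀ k : ℝ, 0 < k →
      Tendsto (fun lam : ℝ =>
          hausdorffDist (((fun p => δ lam (w⁻¹ * p)) '' Γ) ∩ closedBall (1 : G) k)
            (Vw ∩ closedBall (1 : G) k))
        atTop (𝓝 0)) :
    ∀ β : ℝ, 0 < β → ∃ ρ : ℝ, 0 < ρ ∧
      ∀ p ∈ Γ ∩ closedBall w ρ, infDist (w⁻¹ * p) Vw ≤ β * dist (w⁻¹ * p) 1 := by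
  intro β hβ
  have hδ1 : ∀ l, 0 < l → δ l 1 = 1 := by
    intro l hl
    have h := hδmul l hl 1 1
    rw [one_mul] at h
    exact (left_eq_mul.mp h)
  have hev : ∀ᶠ lam : ℝ in atTop,
      hausdorffDist (((fun p => δ lam (w⁻¹ * p)) '' Γ) ∩ closedBall (1 : G) 1)
        (Vw ∩ closedBall (1 : G) 1) < β :=
    (htan 1 one_pos).eventually (gt_mem_nhds hβ)
  obtain ⟨L, hL⟩ := eventually_atTop.mp hev
  set M : ℝ := max L 1 with hMdef
  have hM : (0 : ℝ) < M := lt_of_lt_of_le one_pos (le_max_right _ _)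
  refine ⟨1 / M, by positivity, ?_⟩
  rintro p ⟨hpΓ, hpball⟩
  set q := w⁻¹ * p with hq
  have hdq : dist q 1 = dist p w := by
    rw [← hdleft w q 1, hq, mul_one, mul_inv_cancel_left]
  rcases eq_or_lt_of_le (dist_nonneg : (0:ℝ) ≤ dist q 1) with h0 | hr
  · have : q = 1 := by rw [← dist_eq_zero]; exact h0.symm
    rw [this]
    have : infDist (1 : G) Vw = 0 := infDist_zero_of_mem hV1
    rw [this]
    positivity
  · set r := dist q 1 with hrdef
    have hrpos : 0 < r := hr
    have hrle : r ≤ 1 / M := by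
      rw [hdq]; exact mem_closedBall.mp hpball
    have hlam : L ≤ 1 / r := by
      have h1 : M ≤ 1 / r := by
        rw [le_div_iff₀ hrpos]
        calc M * r ≤ M * (1 / M) := by
              exact mul_le_mul_of_nonneg_left hrle (le_of_lt hM)
          _ = 1 := by field_simp
      exact le_trans (le_max_left _ _) h1
    have hlampos : 0 < 1 / r := by positivity
    have hd := hL (1 / r) hlam
    set x := δ (1 / r) q with hx
    have hx1 : dist x 1 = 1 := by
      rw [hx, ← hδ1 (1 / r) hlampos, hdhom (1 / r) hlampos, ← hrdef]
      field_simp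
    have hxs : x ∈ ((fun p => δ (1 / r) (w⁻¹ * p)) '' Γ) ∩ closedBall (1 : G) 1 := by
      constructor
      · exact ⟨p, hpΓ, rfl⟩
      · rw [mem_closedBall, hx1]
    have hsne : (((fun p => δ (1 / r) (w⁻¹ * p)) '' Γ) ∩ closedBall (1 : G) 1).Nonempty :=
      ⟨x, hxs⟩
    have htne : (Vw ∩ closedBall (1 : G) 1).Nonempty :=
      ⟨1, hV1, mem_closedBall_self zero_le_one⟩
    have hsb : Bornology.IsBounded (((fun p => δ (1 / r) (w⁻¹ * p)) '' Γ) ∩ closedBall (1 : G) 1) :=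
      (isBounded_closedBall).subset Set.inter_subset_right
    have htb : Bornology.IsBounded (Vw ∩ closedBall (1 : G) 1) :=
      (isBounded_closedBall).subset Set.inter_subset_right
    have hne : EMetric.hausdorffEdist (((fun p => δ (1 / r) (w⁻¹ * p)) '' Γ) ∩ closedBall (1 : G) 1)
        (Vw ∩ closedBall (1 : G) 1) ≠ ⊤ :=
      hausdorffEdist_ne_top_of_nonempty_of_bounded hsne htne hsb htb
    have hinf : infDist x (Vw ∩ closedBall (1 : G) 1) < β :=
      lt_of_le_of_lt (infDist_le_hausdorffDist_of_mem hxs hne) hd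
    obtain ⟨v, hv, hdistv⟩ := (infDist_lt_iff htne).mp hinf
    have hvV : v ∈ Vw := hv.1
    have hrv : δ r v ∈ Vw := hVdil r hrpos v hvV
    have hqx : δ r x = q := by
      rw [hx, hδcomp r (1 / r) hrpos hlampos]
      have : r * (1 / r) = 1 := by field_simp
      rw [this, hδone]
    have hdist : dist q (δ r v) = r * dist x v := by
      rw [← hqx, hdhom r hrpos]
    calc infDist q Vw ≤ dist q (δ r v) := infDist_le_dist_of_mem hrv
      _ = r * dist x v := hdist
      _ ≤ r * β := mul_le_mul_of_nonneg_left (le_of_lt hdistv) (le_of_lt hrpos)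
      _ = β * dist q 1 := by rw [← hrdef]; ring
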